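/- arXiv:2305.17526 — 2 statements merged into one kernel-verified Lean document; each statement's English description precedes it below -/
import Mathlib

section
/- Let Γ* be a prefix closed, intersection closed, and singleton suffix closed finite set of predicates over D. For fixed s, the family of sets X_s(α; Γ*) = {x ∈ D^s : x ∈ *α, and for all β ∈ Γ* with α > β, x ∉ *β}, indexed by α ∈ Γ*, is pairwise disjoint; moreover, for any α ∈ Γ*, the set X_s(α) = {x ∈ D^s : x ∈ *α} is the disjoint union of X_s(β; Γ*) over β ∈ Γ* with α ≥ β. -/
open scoped Classical

noncomputable section

/-- A predicate of arity `ar` over `D`: a set of words over `D`, all of length `ar`. -/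
structure GPred (D : Type*) where
  ar : ℕ
  s : Set (List D)
  len : ∀ w ∈ s, w.length = ar

namespace GPred

variable {D : Type*}

/-- `*α`: the set of words whose suffix of length `α.ar` lies in `α`. -/
def star (α : GPred D) : Set (List D) :=
  {w | α.ar ≤ w.length ∧ w.drop (w.length - α.ar) ∈ α.s}

/-- The operation `α | β`: restrict the longer predicate to tuples whose suffix lies
in the shorter one. -/
def bar (α β : GPred D) : GPred D :=
  if β.ar ≤ α.ar then
    ⟨α.ar, {w | w ∈ α.s ∧ w.drop (α.ar - β.ar) ∈ β.s}, fun w hw => α.len w hw.1⟩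
  else
    ⟨β.ar, {w | w ∈ β.s ∧ w.drop (β.ar - α.ar) ∈ α.s}, fun w hw => β.len w hw.1⟩

/-- `α⁻`: drop the last coordinate. -/
def minus (α : GPred D) : GPred D :=
  ⟨α.ar - 1, {w | ∃ a : D, w ++ [a] ∈ α.s}, by
    rintro w ⟨a, ha⟩
    have h := α.len _ ha
    simp at h
    omega⟩

/-- `α⁻ × {a}`. -/
def sufSingle (α : GPred D) (a : D) : GPred D :=
  ⟨α.ar, {w | ∃ w', (∃ b : D, w' ++ [b] ∈ α.s) ∧ w = w' ++ [a]}, by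
    rintro w ⟨w', ⟨b, hb⟩, rfl⟩
    have h := α.len _ hb
    simp at h ⊢
    omega⟩

/-- Prefix projection `α_{1:i}`. -/
def prefProj (α : GPred D) (i : ℕ) : GPred D :=
  ⟨i, {w | w.length = i ∧ ∃ t, w ++ t ∈ α.s}, fun _ hw => hw.1⟩

/-- Suffix projection of length `i`, i.e. `α_{‖α‖-i+1:‖α‖}`. -/
def sufProj (α : GPred D) (i : ℕ) : GPred D :=
  ⟨i, {w | w.length = i ∧ ∃ t, t ++ w ∈ α.s}, fun _ hw => hw.1⟩

/-- A predicate is simple if it is a cartesian product of subsets of `D`. -/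
def IsSimple (α : GPred D) : Prop :=
  ∃ Ωs : List (Set D), α.ar = Ωs.length ∧ α.s = {w | List.Forall₂ (· ∈ ·) w Ωs}

/-- `α ≥ β` iff `*α ⊇ *β`. -/
def pge (α β : GPred D) : Prop := β.star ⊆ α.star

/-- `α > β`. -/
def pgt (α β : GPred D) : Prop := pge α β ∧ α ≠ β

/-- `β ⊊ α`: strict inclusion of predicates of equal arity. -/
def pssub (β α : GPred D) : Prop := β.ar = α.ar ∧ β.s ⊂ α.s

/-- `α ≻ β` iff `‖β‖ > ‖α‖` and the suffix projection `β_{‖β‖-‖α‖+1:‖β‖} ⊆ α`. -/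
def psucc (α β : GPred D) : Prop := α.ar < β.ar ∧ (β.sufProj α.ar).s ⊆ α.s

/-- `α ⪰ β`. -/
def psucceq (α β : GPred D) : Prop := psucc α β ∨ α = β

def PrefClosed (G : Set (GPred D)) : Prop := ∀ ρ ∈ G, 1 ≤ ρ.ar → ρ.minus ∈ G

def InterClosed (G : Set (GPred D)) : Prop := ∀ α ∈ G, ∀ β ∈ G, α.bar β ∈ G

def SSClosed (G : Set (GPred D)) : Prop := ∀ ρ ∈ G, 1 ≤ ρ.ar → ∀ a : D, ρ.sufSingle a ∈ G

/-- `closure(Γ^∩)`: the smallest prefix- and intersection-closed superset of `Γ`. -/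
def piClosure (Γ : Set (GPred D)) : Set (GPred D) :=
  ⋂₀ {G | Γ ⊆ G ∧ PrefClosed G ∧ InterClosed G}

/-- `Γ*`: the smallest prefix-, intersection- and singleton-suffix-closed superset of `Γ`. -/
def fullClosure (Γ : Set (GPred D)) : Set (GPred D) :=
  ⋂₀ {G | Γ ⊆ G ∧ PrefClosed G ∧ InterClosed G ∧ SSClosed G}

/-- `Γ°`: the singleton suffix closure `Γ ∪ {ρ⁻ × {a} : ρ ∈ Γ, a ∈ D}`. -/
def sscSet (Γ : Set (GPred D)) : Set (GPred D) :=
  Γ ∪ {σ | ∃ ρ ∈ Γ, 1 ≤ ρ.ar ∧ ∃ a : D, σ = ρ.sufSingle a}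

/-- Edges of the Hasse diagram of `(G, ≥)`. -/
def HasseGe (G : Set (GPred D)) (α β : GPred D) : Prop :=
  α ∈ G ∧ β ∈ G ∧ pgt α β ∧ ¬ ∃ γ ∈ G, pgt α γ ∧ pgt γ β

/-- Edges of the Hasse diagram of `(G, ⊇)`. -/
def HasseSub (G : Set (GPred D)) (α β : GPred D) : Prop :=
  α ∈ G ∧ β ∈ G ∧ pssub β α ∧ ¬ ∃ γ ∈ G, pssub γ α ∧ pssub β γ

/-- Edges of the graph `G[G]`. -/
def EdgeG (G : Set (GPred D)) (α β : GPred D) : Prop :=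
  α ∈ G ∧ β ∈ G ∧ psucc α β ∧
    ¬ ∃ γ ∈ G, (psucc α γ ∧ psucc γ β) ∨ (pssub γ α ∧ psucc γ β)

/-- `X_s(α; G)`. -/
def X (s : ℕ) (α : GPred D) (G : Set (GPred D)) : Set (List D) :=
  {x | x.length = s ∧ x ∈ α.star ∧ ∀ β ∈ G, pgt α β → x ∉ β.star}

/-- `X_s(α)`. -/
def Xall (s : ℕ) (α : GPred D) : Set (List D) :=
  {x | x.length = s ∧ x ∈ α.star}

/-- Projection of `α` onto its last coordinate. -/
def projLast (α : GPred D) : Set D := {a | ∃ w, w ++ [a] ∈ α.s}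

/-- The cartesian-product predicate `Ω₁ × ⋯ × Ω_l`. -/
def predOfList (Ωs : List (Set D)) : GPred D :=
  ⟨Ωs.length, {w | List.Forall₂ (· ∈ ·) w Ωs}, fun _ hw => List.Forall₂.length_eq hw⟩

end GPred

namespace GPred

variable {D : Type*}

lemma ext' {α β : GPred D} (h1 : α.ar = β.ar) (h2 : α.s = β.s) : α = β := by
  cases α; cases β; simp_all

lemma star_bar (α β : GPred D) : (α.bar β).star = α.star ∩ β.star := by
  unfold bar
  split_ifs with h
  · ext w
    simp only [star, Set.mem_setOf_eq, Set.mem_inter_iff, List.drop_drop]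
    constructor
    · rintro ⟨h1, h2, h3⟩
      refine ⟨⟨h1, h2⟩, le_trans h h1, ?_⟩
      have : w.length - α.ar + (α.ar - β.ar) = w.length - β.ar := by omega
      rwa [this] at h3
    · rintro ⟨⟨h1, h2⟩, h3, h4⟩
      refine ⟨h1, h2, ?_⟩
      have : w.length - α.ar + (α.ar - β.ar) = w.length - β.ar := by omega
      rwa [this]
  · push_neg at h
    ext w
    simp only [star, Set.mem_setOf_eq, Set.mem_inter_iff, List.drop_drop]
    constructor
    · rintro ⟨h1, h2, h3⟩
      refine ⟨⟨le_trans h.le h1, ?_⟩, h1, h2⟩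
      have : w.length - β.ar + (β.ar - α.ar) = w.length - α.ar := by omega
      rwa [this] at h3
    · rintro ⟨⟨h1, h2⟩, h3, h4⟩
      refine ⟨h3, h4, ?_⟩
      have : w.length - β.ar + (β.ar - α.ar) = w.length - α.ar := by omega
      rwa [this]

lemma mem_star_of_mem_s {α : GPred D} {w : List D} (h : w ∈ α.s) : w ∈ α.star := by
  have hl := α.len w h
  refine ⟨hl.ge, ?_⟩
  rw [hl, Nat.sub_self, List.drop_zero]
  exact h

lemma star_injOn {α β : GPred D} (h : α.star = β.star) (hne : α.star.Nonempty) :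
    α = β := by
  have key : ∀ γ δ : GPred D, γ.star = δ.star → γ.star.Nonempty → ¬ (γ.ar < δ.ar) := by
    intro γ δ heq hn hlt
    have hs : γ.s = ∅ := by
      ext w
      simp only [Set.mem_empty_iff_false, iff_false]
      intro hw
      have hst : w ∈ δ.star := heq ▸ mem_star_of_mem_s hw
      have := γ.len w hw
      have := hst.1
      omega
    obtain ⟨w, hw⟩ := hn
    have h2 := hw.2
    rw [hs] at h2
    exact h2
  have har : α.ar = β.ar := by
    rcases lt_trichotomy α.ar β.ar with hl | he | hl
    · exact absurd hl (key α β h hne)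
    · exact he
    · exact absurd hl (key β α h.symm (h ▸ hne))
  refine ext' har ?_
  ext w
  constructor
  · intro hw
    have hst : w ∈ β.star := h ▸ mem_star_of_mem_s hw
    have hl := α.len w hw
    have : w.drop (w.length - β.ar) = w := by
      rw [hl, har, Nat.sub_self, List.drop_zero]
    rw [← this]
    exact hst.2
  · intro hw
    have hst : w ∈ α.star := h ▸ mem_star_of_mem_s hw
    have hl := β.len w hw
    have : w.drop (w.length - α.ar) = w := by
      rw [hl, ← har, Nat.sub_self, List.drop_zero]
    rw [← this]
    exact hst.2

end GPred

open GPred in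
/-- the sets `X_s(α; Γ*)`, `α ∈ Γ*`, are pairwise disjoint, and
`X_s(α)` is the union of `X_s(β; Γ*)` over `β ∈ Γ*` with `α ≥ β`. -/
theorem X_disjoint_and_union {D : Type*} [Fintype D] (G : Set (GPred D))
    (hfin : G.Finite) (hpref : PrefClosed G) (hint : InterClosed G) (hss : SSClosed G)
    (s : ℕ) :
    (∀ α ∈ G, ∀ β ∈ G, α ≠ β → Disjoint (X s α G) (X s β G)) ∧
    (∀ α ∈ G, Xall s α = ⋃ β ∈ {β ∈ G | pge α β}, X s β G) := by
  constructor
  · intro α hα β hβ hne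
    rw [Set.disjoint_left]
    intro x hxα hxβ
    have hδ : α.bar β ∈ G := hint α hα β hβ
    have hx : x ∈ (α.bar β).star := by
      rw [star_bar]; exact ⟨hxα.2.1, hxβ.2.1⟩
    have hge1 : pge α (α.bar β) := by
      rw [pge, star_bar]; exact Set.inter_subset_left
    have hge2 : pge β (α.bar β) := by
      rw [pge, star_bar]; exact Set.inter_subset_right
    by_cases h : α = α.bar β
    · have hβne : β ≠ α.bar β := fun hb => hne (h.trans hb.symm)
      exact hxβ.2.2 _ hδ ⟨hge2, hβne⟩ hx
    · exact hxα.2.2 _ hδ ⟨hge1, h⟩ hx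
  · intro α hα
    ext x
    simp only [Xall, Set.mem_setOf_eq, Set.mem_iUnion, exists_prop]
    constructor
    · rintro ⟨hlen, hstar⟩
      set S : Set (GPred D) := {γ ∈ G | pge α γ ∧ x ∈ γ.star} with hS
      have hSfin : S.Finite := hfin.subset (fun γ hγ => hγ.1)
      have hSne : S.Nonempty := ⟨α, hα, le_refl _, hstar⟩
      obtain ⟨β₀, hβ₀S, hmin⟩ :=
        Set.Finite.exists_minimalFor GPred.star S hSfin hSne
      refine ⟨β₀, ⟨hβ₀S.1, hβ₀S.2.1⟩, hlen, hβ₀S.2.2, ?_⟩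
      intro γ hγ hpgt hxγ
      have hγS : γ ∈ S := ⟨hγ, hpgt.1.trans hβ₀S.2.1, hxγ⟩
      have heq : β₀.star = γ.star := le_antisymm (hmin hγS hpgt.1) hpgt.1
      exact hpgt.2 (star_injOn heq ⟨x, hβ₀S.2.2⟩)
    · rintro ⟨β, ⟨hβG, hpge⟩, hx⟩
      exact ⟨hx.1, hpge hx.2.1⟩
end
end

section
/- Let Γ* be a prefix, intersection, and singleton-suffix closed finite set of predicates over D, and α ∈ Γ* with ‖α‖ ≥ 1 such that the projection of α onto its last coordinate is a singleton {a}. Then X_s(α; Γ*) = T × {a}, where T = {x ∈ D^{s−1} : x ∈ *(α⁻), and for every edge (α,γ) in the Hasse diagram of (Γ*, ≥), x ∉ *(γ⁻)}. -/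
open scoped Classical

noncomputable section

namespace GPred

variable {D : Type*}

lemma self_mem_star {γ : GPred D} {w : List D} (hw : w ∈ γ.s) : w ∈ γ.star := by
  refine ⟨by simp [γ.len w hw], ?_⟩
  simp [γ.len w hw, hw]

lemma eq_of_star_eq {γ δ : GPred D} (h : γ.star = δ.star) (hne : γ.star.Nonempty) :
    γ = δ := by
  obtain ⟨v, hv⟩ := hne
  have hv' : v ∈ δ.star := h ▸ hv
  obtain ⟨w, hw⟩ : γ.s.Nonempty := ⟨v.drop (v.length - γ.ar), hv.2⟩
  obtain ⟨u, hu⟩ : δ.s.Nonempty := ⟨v.drop (v.length - δ.ar), hv'.2⟩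
  have hwlen := γ.len w hw
  have hulen := δ.len u hu
  have hwδ : w ∈ δ.star := h ▸ self_mem_star hw
  have huγ : u ∈ γ.star := h ▸ self_mem_star hu
  have har : γ.ar = δ.ar := by
    have h1 := hwδ.1; have h2 := huγ.1; omega
  have hs : γ.s = δ.s := by
    ext z
    constructor
    · intro hz
      have hz' : z ∈ δ.star := h ▸ self_mem_star hz
      have hzl := γ.len z hz
      have := hz'.2
      rwa [hzl, har, Nat.sub_self, List.drop_zero] at this
    · intro hz
      have hz' : z ∈ γ.star := h ▸ self_mem_star hz
      have hzl := δ.len z hz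
      have := hz'.2
      rwa [hzl, ← har, Nat.sub_self, List.drop_zero] at this
  cases γ; cases δ
  simp only at har hs
  subst har; subst hs
  rfl

end GPred

open GPred in
/-- if the projection of `α ∈ Γ*` onto its last coordinate is `{a}`,
then `X_s(α; Γ*) = T × {a}` with
`T = {x ∈ D^{s-1} : x ∈ *(α⁻), ∀ Hasse edges (α,γ), x ∉ *(γ⁻)}`. -/
theorem X_eq_T_append {D : Type*} [Fintype D] (G : Set (GPred D))
    (hfin : G.Finite) (hpref : PrefClosed G) (hint : InterClosed G) (hss : SSClosed G)
    (α : GPred D) (hα : α ∈ G) (har : 1 ≤ α.ar) (a : D)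
    (hproj : projLast α = {a}) (s : ℕ) (hs : 1 ≤ s) :
    X s α G =
      {x | ∃ y : List D,
        (y.length = s - 1 ∧ y ∈ α.minus.star ∧
          ∀ γ : GPred D, HasseGe G α γ → y ∉ γ.minus.star) ∧
        x = y ++ [a]} := by
  -- every word of `α.star` ends with `a`
  have endA : ∀ (w : List D) (b : D), (w ++ [b]) ∈ α.star → b = a := by
    intro w b hw
    obtain ⟨h1, h2⟩ := hw
    rw [List.length_append, List.length_singleton] at h1 h2
    rw [List.drop_append_of_le_length (by omega)] at h2
    have hb : b ∈ projLast α := ⟨_, h2⟩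
    rw [hproj] at hb
    exact hb
  -- the key correspondence: for `γ` with `1 ≤ γ.ar` and `γ.star ⊆ α.star`,
  -- `y ∈ (γ⁻).star ↔ y ++ [a] ∈ γ.star`.
  have key : ∀ γ : GPred D, 1 ≤ γ.ar → γ.star ⊆ α.star → ∀ y : List D,
      (y ∈ γ.minus.star ↔ y ++ [a] ∈ γ.star) := by
    intro γ hγ1 hsub y
    constructor
    · rintro ⟨h1, hmem⟩
      simp only [minus, Set.mem_setOf_eq] at h1 hmem
      obtain ⟨b, hb⟩ := hmem
      have hba : b = a := endA _ _ (hsub (self_mem_star hb))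
      subst hba
      refine ⟨by simp; omega, ?_⟩
      rw [List.length_append, List.length_singleton,
        List.drop_append_of_le_length (by omega)]
      have : y.length + 1 - γ.ar = y.length - (γ.ar - 1) := by omega
      rw [this]
      exact hb
    · rintro ⟨h1, hmem⟩
      rw [List.length_append, List.length_singleton] at h1 hmem
      rw [List.drop_append_of_le_length (by omega)] at hmem
      refine ⟨by simp [minus]; omega, ?_⟩
      simp only [minus, Set.mem_setOf_eq]
      refine ⟨a, ?_⟩
      have : y.length - (γ.ar - 1) = y.length + 1 - γ.ar := by omega
      rw [this]
      exact hmem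
  -- an element of `G` strictly below `α` whose star contains something has arity ≥ 1
  have arpos : ∀ γ : GPred D, γ.star ⊆ α.star → γ.star.Nonempty → 1 ≤ γ.ar := by
    intro γ hsub ⟨v, hv⟩
    by_contra h
    have hγ0 : γ.ar = 0 := by omega
    have hnil : ([] : List D) ∈ γ.star := by
      refine ⟨by simp [hγ0], ?_⟩
      have := hv.2
      rw [hγ0] at this ⊢
      simp only [Nat.sub_zero, List.drop_length] at this
      simpa using this
    have := (hsub hnil).1
    simp at this
    omega
  ext x
  simp only [X, Set.mem_setOf_eq]
  constructor
  · rintro ⟨hlen, hstar, hbeta⟩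
    have hxne : x ≠ [] := by
      intro h; rw [h] at hlen; simp at hlen; omega
    have hx : x.dropLast ++ [x.getLast hxne] = x := List.dropLast_append_getLast hxne
    have hga : x.getLast hxne = a := endA _ _ (by rw [hx]; exact hstar)
    refine ⟨x.dropLast, ⟨?_, ?_, ?_⟩, by rw [← hga]; exact hx.symm⟩
    · simp [hlen]
    · rw [key α har subset_rfl]
      rw [← hga, hx]; exact hstar
    · rintro γ ⟨-, hγG, hγgt, -⟩ hymem
      have hγ1 : 1 ≤ γ.ar := by
        by_contra h
        have hγ0 : γ.ar = 0 := by omega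
        obtain ⟨h1, hmem⟩ := hymem
        simp only [minus, hγ0, Set.mem_setOf_eq] at hmem
        obtain ⟨b, hb⟩ := hmem
        have := γ.len _ hb
        simp [hγ0] at this
      rw [key γ hγ1 hγgt.1] at hymem
      rw [hga] at hx
      rw [hx] at hymem
      exact hbeta γ hγG hγgt hymem
  · rintro ⟨y, ⟨hylen, hymin, hH⟩, rfl⟩
    have hxα : y ++ [a] ∈ α.star := (key α har subset_rfl y).mp hymin
    refine ⟨by simp [hylen]; omega, hxα, ?_⟩
    intro β hβG hβgt hxβ
    -- find a Hasse edge (α, γ) with x ∈ γ.star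
    set S : Set (GPred D) := {γ ∈ G | pgt α γ ∧ y ++ [a] ∈ γ.star} with hS
    have hSfin : S.Finite := hfin.subset (fun γ hγ => hγ.1)
    have hSne : S.Nonempty := ⟨β, hβG, hβgt, hxβ⟩
    obtain ⟨γ, ⟨hγG, hγgt, hγx⟩, hmax⟩ :=
      (by obtain ⟨i, hi, hm⟩ := Set.Finite.exists_maximalFor GPred.star S hSfin hSne; exact ⟨i, hi, fun j hj hle => le_antisymm hle (hm hj hle)⟩ : ∃ γ ∈ S, ∀ δ ∈ S, γ.star ≤ δ.star → γ.star = δ.star)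
    have hedge : HasseGe G α γ := by
      refine ⟨hα, hγG, hγgt, ?_⟩
      rintro ⟨δ, hδG, hαδ, hδγ⟩
      have hδS : δ ∈ S := ⟨hδG, hαδ, hδγ.1 hγx⟩
      have heq : γ.star = δ.star := hmax δ hδS hδγ.1
      exact hδγ.2 (eq_of_star_eq heq.symm ⟨_, hδγ.1 hγx⟩)
    have hγ1 : 1 ≤ γ.ar := arpos γ hγgt.1 ⟨_, hγx⟩
    exact hH γ hedge ((key γ hγ1 hγgt.1 y).mpr hγx)
end
end
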